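/- Fix a positive integer r and define F_n^{(r)} = F_n^{(r,1)} ∈ Λ as the Frobenius characteristic of (r,1)-parking functions, equal to Σ over weakly increasing (r,1)-parking functions b of length n of h_{m_1(b)} h_{m_2(b)} ⋯ where m_i(b) is the number of i's in b. For a partition λ set F_λ^{(r)} = Π_i F_{λ_i}^{(r)}. Then for each n ≥ 0, the set {F_λ^{(r)} : λ ⊢ n} is a ℤ-basis of the additive group Λ^n of homogeneous degree-n symmetric functions with integer coefficients. -/

import Mathlib

noncomputable section

/-- A model of the ring of symmetric functions `Λ` over `ℤ`: the polynomial ring on the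
(algebraically independent) complete homogeneous symmetric functions `h₁, h₂, …`. -/
abbrev LambdaModel : Type := MvPolynomial {i : ℕ // 0 < i} ℤ

/-- The complete homogeneous symmetric function `h_m` in the model (`h_0 = 1`). -/
def Hgen (m : ℕ) : LambdaModel :=
  if h : 0 < m then MvPolynomial.X ⟨m, h⟩ else 1

/-- `h_μ = h_{μ₁} h_{μ₂} ⋯` for a partition `μ`. -/
def hPart {n : ℕ} (μ : n.Partition) : LambdaModel := (μ.parts.map Hgen).prod

/-- The `Finset` of weakly increasing `(r,1)`-parking functions of length `n`. -/
def WIPFfinset (r n : ℕ) : Finset (Fin n → ℕ) :=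
  (Fintype.piFinset fun i : Fin n => Finset.Icc 1 (1 + i.val * r)).filter
    (fun b => ∀ i j : Fin n, i ≤ j → b i ≤ b j)

/-- The parking function symmetric function `F_n^{(r)} = F_n^{(r,1)}`: the sum over all
weakly increasing `(r,1)`-parking functions `b` of length `n` of `h_{m₁(b)} h_{m₂(b)} ⋯`,
where `m_i(b)` is the number of entries of `b` equal to `i`. -/
def Fpf (r n : ℕ) : LambdaModel :=
  ∑ b ∈ WIPFfinset r n,
    ∏ i ∈ Finset.range (1 + n * r + 1), Hgen ((Finset.univ.filter fun j => b j = i).card)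

/-- `F_λ^{(r)} = F_{λ₁}^{(r)} F_{λ₂}^{(r)} ⋯`. -/
def FpfPart (r : ℕ) {n : ℕ} (μ : n.Partition) : LambdaModel := (μ.parts.map (Fpf r)).prod

/- Auxiliary development. -/


-- auxiliary

def Hmul (s : Multiset ℕ) : LambdaModel := (s.map Hgen).prod

def Dm (s : Multiset ℕ) : ({i : ℕ // 0 < i} →₀ ℕ) :=
  (s.map fun p => if h : 0 < p then Finsupp.single (⟨p, h⟩ : {i : ℕ // 0 < i}) 1 else 0).sum

lemma Hmul_cons (a : ℕ) (s : Multiset ℕ) : Hmul (a ::ₘ s) = Hgen a * Hmul s := by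
  simp [Hmul, Multiset.map_cons]

lemma Hmul_add (s t : Multiset ℕ) : Hmul (s + t) = Hmul s * Hmul t := by
  simp [Hmul]

lemma Hmul_eq_monomial (s : Multiset ℕ) (hs : (0:ℕ) ∉ s) :
    Hmul s = MvPolynomial.monomial (Dm s) 1 := by
  induction s using Multiset.induction with
  | empty => simp [Hmul, Dm]
  | cons a s ih =>
    have ha : 0 < a := Nat.pos_of_ne_zero (by rintro rfl; exact hs (Multiset.mem_cons_self _ _))
    have hs' : (0:ℕ) ∉ s := fun h => hs (Multiset.mem_cons_of_mem h)
    rw [Hmul_cons, ih hs']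
    have hD : Dm (a ::ₘ s) = Finsupp.single ⟨a, ha⟩ 1 + Dm s := by
      simp [Dm, Multiset.map_cons, Multiset.sum_cons, dif_pos ha]
    rw [hD, Hgen, dif_pos ha, MvPolynomial.X, MvPolynomial.monomial_mul, one_mul]

lemma Dm_apply (s : Multiset ℕ) (hs : (0:ℕ) ∉ s) (p : ℕ) (hp : 0 < p) :
    Dm s ⟨p, hp⟩ = s.count p := by
  induction s using Multiset.induction with
  | empty => simp [Dm]
  | cons a s ih =>
    have ha : 0 < a := Nat.pos_of_ne_zero (by rintro rfl; exact hs (Multiset.mem_cons_self _ _))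
    have hs' : (0:ℕ) ∉ s := fun h => hs (Multiset.mem_cons_of_mem h)
    have hD : Dm (a ::ₘ s) = Finsupp.single ⟨a, ha⟩ 1 + Dm s := by
      simp [Dm, Multiset.map_cons, Multiset.sum_cons, dif_pos ha]
    rw [hD, Finsupp.add_apply, ih hs', Multiset.count_cons, Finsupp.single_apply]
    by_cases h : a = p
    · subst h; simp [add_comm]
    · simp [h, Subtype.ext_iff, Ne.symm h]

lemma Dm_inj {s t : Multiset ℕ} (hs : (0:ℕ) ∉ s) (ht : (0:ℕ) ∉ t) (h : Dm s = Dm t) :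
    s = t := by
  ext p
  rcases Nat.eq_zero_or_pos p with rfl | hp
  · simp [Multiset.count_eq_zero_of_notMem hs, Multiset.count_eq_zero_of_notMem ht]
  · rw [← Dm_apply s hs p hp, ← Dm_apply t ht p hp, h]

lemma hPart_eq (n : ℕ) (μ : n.Partition) : hPart μ = Hmul μ.parts := rfl

lemma linearIndependent_hPart (n : ℕ) :
    LinearIndependent ℤ (fun μ : n.Partition => hPart μ) := by
  have h0 : ∀ μ : n.Partition, (0:ℕ) ∉ μ.parts := fun μ h => (μ.parts_pos h).ne' rfl
  have key : (fun μ : n.Partition => hPart μ) =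
      (MvPolynomial.basisMonomials {i : ℕ // 0 < i} ℤ) ∘ (fun μ => Dm μ.parts) := by
    funext μ
    simp [hPart_eq, Hmul_eq_monomial _ (h0 μ), MvPolynomial.coe_basisMonomials]
  rw [key]
  exact (MvPolynomial.basisMonomials _ _).linearIndependent.comp _
    (fun μ ν h => Nat.Partition.ext (Dm_inj (h0 μ) (h0 ν) h))
def Sgen (m k : ℕ) : Set LambdaModel :=
  {p | ∃ s : Multiset ℕ, s.sum = m ∧ k ≤ Multiset.card s ∧ (0:ℕ) ∉ s ∧ p = Hmul s}

def Sspan (m k : ℕ) : Submodule ℤ LambdaModel := Submodule.span ℤ (Sgen m k)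

lemma Sspan_anti (m : ℕ) {k k' : ℕ} (h : k ≤ k') : Sspan m k' ≤ Sspan m k :=
  Submodule.span_mono (fun p ⟨s, h1, h2, h3, h4⟩ => ⟨s, h1, h.trans h2, h3, h4⟩)

lemma Hmul_mem_Sspan {s : Multiset ℕ} (hs : (0:ℕ) ∉ s) : Hmul s ∈ Sspan s.sum (Multiset.card s) :=
  Submodule.subset_span ⟨s, rfl, le_refl _, hs, rfl⟩

lemma Hgen_mem_Sspan {m : ℕ} (hm : 0 < m) : Hgen m ∈ Sspan m 1 := by
  have : Hgen m = Hmul {m} := by simp [Hmul]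
  rw [this]
  exact Submodule.subset_span ⟨{m}, by simp, by simp, by simp [Ne.symm hm.ne'], rfl⟩

lemma mul_mem_Sspan {m k m' k' : ℕ} {x y : LambdaModel}
    (hx : x ∈ Sspan m k) (hy : y ∈ Sspan m' k') : x * y ∈ Sspan (m + m') (k + k') := by
  have h := Submodule.mul_mem_mul hx hy
  rw [Sspan, Sspan, Submodule.span_mul_span] at h
  refine Submodule.span_le.mpr ?_ h
  rintro p ⟨a, ⟨s, hs1, hs2, hs3, rfl⟩, b, ⟨t, ht1, ht2, ht3, rfl⟩, rfl⟩
  refine Submodule.subset_span ⟨s + t, by simp [hs1, ht1], ?_, ?_, (Hmul_add s t).symm⟩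
  · simpa using Nat.add_le_add hs2 ht2
  · simp [hs3, ht3]

lemma Sspan_eq_bot (m k : ℕ) (h : m < k) : Sspan m k = ⊥ := by
  rw [Sspan]
  convert Submodule.span_empty
  rw [Set.eq_empty_iff_forall_notMem]
  rintro p ⟨s, rfl, h2, h3, rfl⟩
  have : Multiset.card s ≤ s.sum := by
    calc Multiset.card s = (s.map fun _ => 1).sum := by simp
    _ ≤ s.sum := by
        have := Multiset.sum_map_le_sum_map (fun _ : ℕ => 1) id
          (s := s) (fun x hx => Nat.one_le_iff_ne_zero.mpr (fun h0 => h3 (h0 ▸ hx)))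
        simpa using this
  omega
lemma prod_Hgen_filter (u : Multiset ℕ) :
    ((u.filter (fun x => x ≠ 0)).map Hgen).prod = (u.map Hgen).prod := by
  induction u using Multiset.induction with
  | empty => simp
  | cons a u ih =>
    by_cases ha : a = 0
    · subst ha
      rw [Multiset.filter_cons_of_neg _ (by simp)]
      simpa [Hgen] using ih
    · rw [Multiset.filter_cons_of_pos _ (by simp [ha])]
      simp [ih]

lemma sum_filter_ne_zero (u : Multiset ℕ) : (u.filter (fun x => x ≠ 0)).sum = u.sum := by
  induction u using Multiset.induction with
  | empty => simp
  | cons a u ih =>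
    by_cases ha : a = 0
    · subst ha; rw [Multiset.filter_cons_of_neg _ (by simp)]; simp [ih]
    · rw [Multiset.filter_cons_of_pos _ (by simp [ha])]; simp [ih]

lemma term_eq_Hmul (t : Finset ℕ) (c : ℕ → ℕ) :
    (∏ i ∈ t, Hgen (c i)) = Hmul ((t.val.map c).filter (fun x => x ≠ 0)) := by
  rw [Hmul, prod_Hgen_filter, Multiset.map_map]
  rfl

lemma Fpf_sub_Hgen (r : ℕ) (hr : 0 < r) (m : ℕ) : Fpf r m - Hgen m ∈ Sspan m 2 := by
  rcases Nat.eq_zero_or_pos m with rfl | hm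
  · have h1 : WIPFfinset r 0 = {(fun _ => 1 : Fin 0 → ℕ)} := by
      rw [Finset.eq_singleton_iff_unique_mem]
      constructor
      · rw [WIPFfinset, Finset.mem_filter, Fintype.mem_piFinset]
        exact ⟨fun i => i.elim0, fun i => i.elim0⟩
      · intro b _; funext i; exact i.elim0
    have : Fpf r 0 = 1 := by
      rw [Fpf, h1, Finset.sum_singleton]
      have : ∀ i : ℕ, (Finset.univ.filter fun j : Fin 0 => (1:ℕ) = i).card = 0 := by
        intro i
        simp only [Finset.card_eq_zero]
        ext j; exact j.elim0
      refine Finset.prod_eq_one (fun i _ => ?_)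
      rw [this i]
      simp [Hgen]
    rw [this, Hgen, dif_neg (by omega), sub_self]
    exact Submodule.zero_mem _
  -- the all-ones parking function
  set N := 1 + m * r + 1 with hN
  set ones : Fin m → ℕ := fun _ => 1 with hones
  have hmem : ones ∈ WIPFfinset r m := by
    rw [WIPFfinset, Finset.mem_filter]
    constructor
    · rw [Fintype.mem_piFinset]
      intro i
      simp [ones, Finset.mem_Icc]
    · intro i j _; rfl
  -- fibers
  have hfib : ∀ b : Fin m → ℕ, b ∈ WIPFfinset r m → ∀ j : Fin m, b j ∈ Finset.range N := by
    intro b hb j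
    rw [WIPFfinset, Finset.mem_filter, Fintype.mem_piFinset] at hb
    have := hb.1 j
    rw [Finset.mem_Icc] at this
    have hj : j.val ≤ m - 1 := by omega
    have : b j ≤ 1 + (m-1) * r := by
      have := Nat.mul_le_mul_right r hj
      omega
    rw [Finset.mem_range]
    have : (m-1) * r ≤ m * r := Nat.mul_le_mul_right r (by omega)
    omega
  have hsum : ∀ b : Fin m → ℕ, b ∈ WIPFfinset r m →
      (∑ i ∈ Finset.range N, (Finset.univ.filter fun j => b j = i).card) = m := by
    intro b hb
    have := Finset.card_eq_sum_card_fiberwise (fun j (_ : j ∈ (Finset.univ : Finset (Fin m))) =>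
      hfib b hb j)
    simpa using this.symm
  -- first entry is 1
  have hfirst : ∀ b : Fin m → ℕ, b ∈ WIPFfinset r m → b ⟨0, hm⟩ = 1 := by
    intro b hb
    rw [WIPFfinset, Finset.mem_filter, Fintype.mem_piFinset] at hb
    have := hb.1 ⟨0, hm⟩
    rw [Finset.mem_Icc] at this
    have hv : ((⟨0, hm⟩ : Fin m)).val = 0 := rfl
    rw [hv] at this
    omega
  -- the ones term equals Hgen m
  have hones_term : (∏ i ∈ Finset.range N,
      Hgen ((Finset.univ.filter fun j => ones j = i).card)) = Hgen m := by
    rw [Finset.prod_eq_single_of_mem 1 (by rw [Finset.mem_range]; omega)]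
    · congr 1
      simp [ones]
    · intro i _ hi
      have : (Finset.univ.filter fun j : Fin m => ones j = i) = ∅ := by
        ext j; simp [ones, Ne.symm hi]
      rw [this]
      simp [Hgen]
  rw [Fpf, ← Finset.add_sum_erase _ _ hmem, hones_term, add_sub_cancel_left]
  refine Submodule.sum_mem _ ?_
  intro b hb'
  have hb : b ∈ WIPFfinset r m := Finset.mem_of_mem_erase hb'
  have hbne : b ≠ ones := Finset.ne_of_mem_erase hb'
  set c : ℕ → ℕ := fun i => (Finset.univ.filter fun j => b j = i).card with hc
  rw [term_eq_Hmul]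
  set s := (((Finset.range N).val.map c).filter (fun x => x ≠ 0)) with hs
  have h0 : (0:ℕ) ∉ s := by
    intro h
    have := Multiset.of_mem_filter h
    simp at this
  have hsum' : s.sum = m := by rw [hs, sum_filter_ne_zero, ← hsum b hb]; rfl
  have hcard : 2 ≤ Multiset.card s := by
    -- two distinct values: 1 and b j0 for some j0 with b j0 ≠ 1
    obtain ⟨j0, hj0⟩ : ∃ j0, b j0 ≠ 1 := by
      by_contra h
      push_neg at h
      exact hbne (funext h)
    have h1 : c 1 ≠ 0 :=
      Finset.card_ne_zero.mpr ⟨⟨0, hm⟩, by simp [hfirst b hb]⟩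
    have h2 : c (b j0) ≠ 0 := Finset.card_ne_zero.mpr ⟨j0, by simp⟩
    rw [hs, Multiset.filter_map, Multiset.card_map]
    have key : 1 < ((Finset.range N).filter (fun i => c i ≠ 0)).card := by
      rw [Finset.one_lt_card_iff]
      refine ⟨1, b j0, ?_, ?_, ?_⟩
      · rw [Finset.mem_filter, Finset.mem_range]; exact ⟨by omega, h1⟩
      · rw [Finset.mem_filter]
        exact ⟨hfib b hb j0, h2⟩
      · exact fun h => hj0 h.symm
    have hrw : ((Finset.range N).filter (fun i => c i ≠ 0)).card
        = Multiset.card (Multiset.filter ((fun x => x ≠ 0) ∘ c) (Finset.range N).val) := rfl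
    rw [hrw] at key
    omega
  exact Submodule.subset_span ⟨s, hsum', hcard, h0, rfl⟩

def Gmul (r : ℕ) (s : Multiset ℕ) : LambdaModel := (s.map (Fpf r)).prod

lemma FpfPart_eq (r n : ℕ) (μ : n.Partition) : FpfPart r μ = Gmul r μ.parts := rfl

lemma Gmul_sub_Hmul (r : ℕ) (hr : 0 < r) (s : Multiset ℕ) (hs : (0:ℕ) ∉ s) :
    Gmul r s - Hmul s ∈ Sspan s.sum (Multiset.card s + 1) := by
  induction s using Multiset.induction with
  | empty => simp [Gmul, Hmul]
  | cons a s ih =>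
    have ha : 0 < a := Nat.pos_of_ne_zero (by rintro rfl; exact hs (Multiset.mem_cons_self _ _))
    have hs' : (0:ℕ) ∉ s := fun h => hs (Multiset.mem_cons_of_mem h)
    have hx : Fpf r a - Hgen a ∈ Sspan a 2 := Fpf_sub_Hgen r hr a
    have hy := ih hs'
    have hG : Gmul r (a ::ₘ s) = Fpf r a * Gmul r s := by simp [Gmul]
    have expand : Gmul r (a ::ₘ s) - Hmul (a ::ₘ s) =
        Hgen a * (Gmul r s - Hmul s) + (Fpf r a - Hgen a) * Hmul s
          + (Fpf r a - Hgen a) * (Gmul r s - Hmul s) := by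
      rw [hG, Hmul_cons]; ring
    rw [expand]
    have hsum : (a ::ₘ s).sum = a + s.sum := by simp
    have hcard : Multiset.card (a ::ₘ s) = Multiset.card s + 1 := by simp
    rw [hsum, hcard]
    refine Submodule.add_mem _ (Submodule.add_mem _ ?_ ?_) ?_
    · have := mul_mem_Sspan (Hgen_mem_Sspan ha) hy
      exact Sspan_anti _ (by omega) this
    · have := mul_mem_Sspan hx (Hmul_mem_Sspan hs')
      exact Sspan_anti _ (by omega) this
    · have := mul_mem_Sspan hx hy
      exact Sspan_anti _ (by omega) this

lemma FpfPart_sub_hPart (r : ℕ) (hr : 0 < r) {n : ℕ} (μ : n.Partition) :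
    FpfPart r μ - hPart μ ∈ Sspan n (μ.parts.card + 1) := by
  have h0 : (0:ℕ) ∉ μ.parts := fun h => (μ.parts_pos h).ne' rfl
  have := Gmul_sub_Hmul r hr μ.parts h0
  rwa [μ.parts_sum] at this

lemma card_le_of_partition {n : ℕ} (μ : n.Partition) : μ.parts.card ≤ n := by
  have h0 : (0:ℕ) ∉ μ.parts := fun h => (μ.parts_pos h).ne' rfl
  have key : Multiset.card μ.parts ≤ μ.parts.sum := by
    calc Multiset.card μ.parts = (μ.parts.map fun _ => 1).sum := by simp
    _ ≤ μ.parts.sum := by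
        have := Multiset.sum_map_le_sum_map (fun _ : ℕ => 1) id
          (s := μ.parts) (fun x hx => Nat.one_le_iff_ne_zero.mpr (fun h => h0 (h ▸ hx)))
        simpa using this
  rwa [μ.parts_sum] at key

lemma Sspan_le_span_hPart (n k : ℕ) :
    Sspan n k ≤ Submodule.span ℤ (Set.range fun μ : n.Partition => hPart μ) := by
  rw [Sspan, Submodule.span_le]
  rintro p ⟨s, hs1, _, hs3, rfl⟩
  exact Submodule.subset_span ⟨⟨s, fun h => Nat.pos_of_ne_zero (fun h0 => hs3 (h0 ▸ h)), hs1⟩, rfl⟩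

lemma Sspan_mem_span_FpfPart (r : ℕ) (hr : 0 < r) (n : ℕ) : ∀ j : ℕ,
    Sspan n (n + 1 - j) ≤ Submodule.span ℤ (Set.range fun μ : n.Partition => FpfPart r μ) := by
  intro j
  induction j with
  | zero =>
    rw [Nat.sub_zero, Sspan_eq_bot n (n+1) (by omega)]
    exact bot_le
  | succ j ih =>
    rw [Sspan, Submodule.span_le]
    rintro p ⟨s, hs1, hs2, hs3, rfl⟩
    set μ : n.Partition := ⟨s, fun h => Nat.pos_of_ne_zero (fun h0 => hs3 (h0 ▸ h)), hs1⟩ with hμ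
    have hH : Hmul s = hPart μ := rfl
    have h1 : FpfPart r μ ∈ Submodule.span ℤ (Set.range fun ν : n.Partition => FpfPart r ν) :=
      Submodule.subset_span ⟨μ, rfl⟩
    have h2 : FpfPart r μ - hPart μ ∈ Sspan n (n + 1 - j) := by
      refine Sspan_anti _ ?_ (FpfPart_sub_hPart r hr μ)
      have : μ.parts.card = Multiset.card s := rfl
      omega
    have := Submodule.sub_mem _ h1 (ih h2)
    simpa [hH] using this

lemma span_FpfPart_eq (r : ℕ) (hr : 0 < r) (n : ℕ) :
    Submodule.span ℤ (Set.range fun μ : n.Partition => FpfPart r μ) =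
      Submodule.span ℤ (Set.range fun μ : n.Partition => hPart μ) := by
  apply le_antisymm
  · rw [Submodule.span_le]
    rintro p ⟨μ, rfl⟩
    have h1 : hPart μ ∈ Submodule.span ℤ (Set.range fun ν : n.Partition => hPart ν) :=
      Submodule.subset_span ⟨μ, rfl⟩
    have h2 := Sspan_le_span_hPart n (μ.parts.card + 1) (FpfPart_sub_hPart r hr μ)
    have := Submodule.add_mem _ h2 h1
    simpa using this
  · rw [Submodule.span_le]
    rintro p ⟨μ, rfl⟩
    refine Sspan_mem_span_FpfPart r hr n (n + 1) ?_
    simp only [Nat.sub_self]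
    have h0 : (0:ℕ) ∉ μ.parts := fun h => (μ.parts_pos h).ne' rfl
    have := Hmul_mem_Sspan h0
    rw [μ.parts_sum] at this
    exact Sspan_anti _ (by omega) this

lemma Sspan_le_span_hPart' (n k : ℕ) :
    Sspan n k ≤ Submodule.span ℤ
      ((fun μ : n.Partition => hPart μ) '' {ν : n.Partition | k ≤ ν.parts.card}) := by
  rw [Sspan, Submodule.span_le]
  rintro p ⟨s, hs1, hs2, hs3, rfl⟩
  exact Submodule.subset_span
    ⟨⟨s, fun h => Nat.pos_of_ne_zero (fun h0 => hs3 (h0 ▸ h)), hs1⟩, hs2, rfl⟩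

lemma linearIndependent_FpfPart (r : ℕ) (hr : 0 < r) (n : ℕ) :
    LinearIndependent ℤ (fun μ : n.Partition => FpfPart r μ) := by
  rw [linearIndependent_iff]
  intro g hg
  have hLI := linearIndependent_hPart n
  suffices H : ∀ k : ℕ, ∀ μ : n.Partition, μ.parts.card < k → g μ = 0 by
    ext μ
    exact H (n+1) μ (by have := card_le_of_partition μ; omega)
  intro k
  induction k with
  | zero => intro μ h; omega
  | succ k ih =>
    intro μ0 hμ0
    rcases Nat.lt_or_ge μ0.parts.card k with h | h
    · exact ih μ0 h
    have hk0 : μ0.parts.card = k := by omega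
    -- x := ∑ g μ • hPart μ
    set x := Finsupp.linearCombination ℤ (fun μ : n.Partition => hPart μ) g with hx
    have hx_mem : x ∈ Sspan n (k + 1) := by
      have hxe : x = ∑ μ ∈ g.support, g μ • (hPart μ - FpfPart r μ) := by
        rw [hx, Finsupp.linearCombination_apply, Finsupp.sum]
        rw [Finsupp.linearCombination_apply, Finsupp.sum] at hg
        rw [← sub_zero (∑ μ ∈ g.support, g μ • hPart μ), ← hg, ← Finset.sum_sub_distrib]
        exact Finset.sum_congr rfl (fun μ _ => (smul_sub _ _ _).symm)
      rw [hxe]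
      refine Submodule.sum_mem _ (fun μ hμ => ?_)
      have hcard : k ≤ μ.parts.card := by
        by_contra hcon
        exact Finsupp.mem_support_iff.mp hμ (ih μ (by omega))
      refine Submodule.smul_mem _ _ ?_
      have := Submodule.neg_mem _ (FpfPart_sub_hPart r hr μ)
      rw [neg_sub] at this
      exact Sspan_anti _ (by omega) this
    have hx_span := Sspan_le_span_hPart' n (k+1) hx_mem
    rw [Finsupp.mem_span_image_iff_linearCombination] at hx_span
    obtain ⟨l, hl, hlx⟩ := hx_span
    have : l = g := hLI (by rw [hlx])
    subst this
    have : μ0 ∉ {ν : n.Partition | k + 1 ≤ ν.parts.card} := by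
      simp [hk0]
    by_contra hne
    exact this (hl (Finsupp.mem_support_iff.mpr hne))


/-- For each `n ≥ 0`, the family `{F_λ^{(r)} : λ ⊢ n}` is a `ℤ`-basis of the homogeneous
degree-`n` component `Λⁿ` of the ring of symmetric functions, i.e. it is linearly
independent and spans the same `ℤ`-module as `{h_λ : λ ⊢ n}`. -/
theorem stmt17 (r : ℕ) (hr : 0 < r) (n : ℕ) :
    LinearIndependent ℤ (fun μ : n.Partition => FpfPart r μ) ∧
    Submodule.span ℤ (Set.range fun μ : n.Partition => FpfPart r μ) =
      Submodule.span ℤ (Set.range fun μ : n.Partition => hPart μ) :=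
  ⟨linearIndependent_FpfPart r hr n, span_FpfPart_eq r hr n⟩
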